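/- There exists a universal constant C > 0 such that for every integer n ≥ 1, Σ_{j=0}^{n} C(n,j) · a_j · a_{n-j} ≤ C · n^{n-1}, where a_0 := 1 and a_j := j^{j-1} for integers j ≥ 1, and C(n,j) denotes the binomial coefficient. Equivalently, 2·n^{n-1} + Σ_{j=1}^{n-1} C(n,j) · j^{j-1} · (n-j)^{n-j-1} ≤ C · n^{n-1} for all n ≥ 1. -/

import Mathlib

open Finset

/-- The coefficient sequence: `a 0 = 1` (convention `0^s = 1`) and `a j = j^(j-1)`
for `j ≥ 1`. -/
noncomputable def kahaneCoeff (j : ℕ) : ℝ := if j = 0 then 1 else (j : ℝ) ^ (j - 1)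

open Real Filter Topology Nat

lemma stir_lower (n : ℕ) : Real.sqrt π ≤ Stirling.stirlingSeq (n+1) := by
  have ht : Tendsto (Stirling.stirlingSeq ∘ Nat.succ) atTop (𝓝 (Real.sqrt π)) :=
    Stirling.tendsto_stirlingSeq_sqrt_pi.comp (tendsto_add_atTop_nat 1)
  exact Stirling.stirlingSeq'_antitone.le_of_tendsto ht n

lemma fact_eq (n : ℕ) (hn : 1 ≤ n) :
    (n ! : ℝ) = Stirling.stirlingSeq n * (Real.sqrt (2*n) * (n / Real.exp 1)^n) := by
  rw [Stirling.stirlingSeq, div_mul_cancel₀]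
  have : (0:ℝ) < n := by exact_mod_cast hn
  positivity

lemma fact_upper (n : ℕ) (hn : 1 ≤ n) :
    (n ! : ℝ) ≤ Real.exp 1 * (Real.sqrt n * (n / Real.exp 1)^n) := by
  obtain ⟨m, rfl⟩ := Nat.exists_eq_add_of_le hn
  rw [fact_eq _ hn]
  have h1 : Stirling.stirlingSeq (1+m) ≤ Real.exp 1 / Real.sqrt 2 := by
    have h := Stirling.stirlingSeq'_antitone (Nat.zero_le m)
    simpa [Stirling.stirlingSeq_one, Nat.succ_eq_add_one, add_comm] using h
  have h2 : Real.sqrt (2*(1+m:ℕ)) = Real.sqrt 2 * Real.sqrt ((1+m:ℕ):ℝ) := by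
    push_cast
    rw [Real.sqrt_mul (by norm_num)]
  have hpos : (0:ℝ) ≤ Real.sqrt (2*(1+m:ℕ)) * (((1+m:ℕ):ℝ) / Real.exp 1)^(1+m) := by positivity
  calc Stirling.stirlingSeq (1+m) * (Real.sqrt (2*(1+m:ℕ)) * (((1+m:ℕ):ℝ) / Real.exp 1)^(1+m))
      ≤ (Real.exp 1 / Real.sqrt 2) * (Real.sqrt (2*(1+m:ℕ)) * (((1+m:ℕ):ℝ) / Real.exp 1)^(1+m)) :=
        mul_le_mul_of_nonneg_right h1 hpos
    _ = Real.exp 1 * (Real.sqrt ((1+m:ℕ):ℝ) * (((1+m:ℕ):ℝ) / Real.exp 1)^(1+m)) := by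
        rw [h2]
        have : Real.sqrt 2 ≠ 0 := by positivity
        field_simp

lemma fact_lower (n : ℕ) (hn : 1 ≤ n) :
    Real.sqrt 2 * Real.sqrt n * (n / Real.exp 1)^n ≤ (n ! : ℝ) := by
  obtain ⟨m, rfl⟩ := Nat.exists_eq_add_of_le hn
  rw [fact_eq _ hn]
  have h1 : (1:ℝ) ≤ Stirling.stirlingSeq (1+m) := by
    have := stir_lower m
    have hpi : (1:ℝ) ≤ Real.sqrt π := by
      rw [show (1:ℝ) = Real.sqrt 1 by simp]
      exact Real.sqrt_le_sqrt (by linarith [Real.pi_gt_three])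
    rw [add_comm]
    linarith
  have h2 : Real.sqrt (2*(1+m:ℕ)) = Real.sqrt 2 * Real.sqrt ((1+m:ℕ):ℝ) := by
    push_cast
    rw [Real.sqrt_mul (by norm_num)]
  have hb : (0:ℝ) ≤ Real.sqrt (2*(1+m:ℕ)) * (((1+m:ℕ):ℝ)/Real.exp 1)^(1+m) := by positivity
  have h3 := le_mul_of_one_le_left hb h1
  calc Real.sqrt 2 * Real.sqrt ((1+m:ℕ):ℝ) * (((1+m:ℕ):ℝ)/Real.exp 1)^(1+m)
      = Real.sqrt (2*(1+m:ℕ)) * (((1+m:ℕ):ℝ)/Real.exp 1)^(1+m) := by rw [h2]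
    _ ≤ _ := h3

lemma sum_inv_le (m : ℕ) :
    ∑ i ∈ range m, 1/(((i:ℝ)+1) * Real.sqrt ((i:ℝ)+1)) ≤ 3 - 2/Real.sqrt m := by
  induction m with
  | zero => simp
  | succ m ih =>
    rw [Finset.sum_range_succ]
    rcases Nat.eq_zero_or_pos m with rfl | hm
    · norm_num
    · have hmr : (1:ℝ) ≤ (m:ℝ) := by exact_mod_cast hm
      set a := Real.sqrt m with ha
      set b := Real.sqrt ((m:ℝ)+1) with hb
      have ha1 : 1 ≤ a := by rw [ha, show (1:ℝ) = Real.sqrt 1 by simp]; exact Real.sqrt_le_sqrt hmr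
      have hb0 : 0 < b := by rw [hb]; positivity
      have ha0 : (0:ℝ) < a := by linarith
      have hab : a ≤ b := Real.sqrt_le_sqrt (by linarith)
      have ha2 : a^2 = m := Real.sq_sqrt (by linarith)
      have hb2 : b^2 = (m:ℝ)+1 := Real.sq_sqrt (by linarith)
      have key : 1/(((m:ℝ)+1)*b) ≤ 2/a - 2/b := by
        rw [div_sub_div _ _ ha0.ne' hb0.ne', div_le_div_iff₀ (by positivity) (by positivity)]
        rw [← hb2]
        nlinarith [mul_pos ha0 hb0, sq_nonneg (b-a)]
      have hcast : ((m:ℝ)+1) = ((m+1:ℕ):ℝ) := by push_cast; ring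
      have : 2/b = 2/Real.sqrt ((m+1:ℕ):ℝ) := by rw [hb, hcast]
      push_cast
      linarith [ih]

lemma split_bound (j k : ℕ) (hj : 1 ≤ j) (hk : 1 ≤ k) :
    1/((j:ℝ)*Real.sqrt j*((k:ℝ)*Real.sqrt k)) ≤
      2*Real.sqrt 2/(((j:ℝ)+(k:ℝ))*Real.sqrt ((j:ℝ)+(k:ℝ)))
        * (1/((j:ℝ)*Real.sqrt j) + 1/((k:ℝ)*Real.sqrt k)) := by
  have hjr : (1:ℝ) ≤ (j:ℝ) := by exact_mod_cast hj
  have hkr : (1:ℝ) ≤ (k:ℝ) := by exact_mod_cast hk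
  have hsj : (0:ℝ) < Real.sqrt j := Real.sqrt_pos.mpr (by linarith)
  have hsk : (0:ℝ) < Real.sqrt k := Real.sqrt_pos.mpr (by linarith)
  have hsn : (0:ℝ) < Real.sqrt ((j:ℝ)+(k:ℝ)) := Real.sqrt_pos.mpr (by linarith)
  have hmono : ∀ x y : ℝ, 0 ≤ x → x ≤ y → x * Real.sqrt x ≤ y * Real.sqrt y := by
    intro x y hx hxy
    exact mul_le_mul hxy (Real.sqrt_le_sqrt hxy) (Real.sqrt_nonneg x) (by linarith)
  have hs2 : Real.sqrt 2 > 0 := by positivity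
  rcases le_total (j:ℝ) (k:ℝ) with h | h
  · -- k is the big one: j+k ≤ 2k
    have h1 : ((j:ℝ)+(k:ℝ)) * Real.sqrt ((j:ℝ)+(k:ℝ)) ≤ 2*Real.sqrt 2 * ((k:ℝ)*Real.sqrt k) := by
      have := hmono ((j:ℝ)+(k:ℝ)) (2*k) (by linarith) (by linarith)
      have h2k : Real.sqrt (2*(k:ℝ)) = Real.sqrt 2 * Real.sqrt k := Real.sqrt_mul (by norm_num) _
      rw [h2k] at this
      nlinarith
    have h2 : 1/((k:ℝ)*Real.sqrt k) ≤ 2*Real.sqrt 2/(((j:ℝ)+(k:ℝ))*Real.sqrt ((j:ℝ)+(k:ℝ))) := by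
      rw [div_le_div_iff₀ (by positivity) (by positivity)]
      nlinarith
    have hpos1 : (0:ℝ) < 1/((j:ℝ)*Real.sqrt j) := by positivity
    have hpos2 : (0:ℝ) ≤ 2*Real.sqrt 2/(((j:ℝ)+(k:ℝ))*Real.sqrt ((j:ℝ)+(k:ℝ)))*(1/((k:ℝ)*Real.sqrt k)) := by positivity
    calc 1/((j:ℝ)*Real.sqrt j*((k:ℝ)*Real.sqrt k))
        = (1/((j:ℝ)*Real.sqrt j)) * (1/((k:ℝ)*Real.sqrt k)) := by ring
      _ ≤ (1/((j:ℝ)*Real.sqrt j)) * (2*Real.sqrt 2/(((j:ℝ)+(k:ℝ))*Real.sqrt ((j:ℝ)+(k:ℝ)))) := by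
          exact mul_le_mul_of_nonneg_left h2 hpos1.le
      _ ≤ 2*Real.sqrt 2/(((j:ℝ)+(k:ℝ))*Real.sqrt ((j:ℝ)+(k:ℝ))) * (1/((j:ℝ)*Real.sqrt j) + 1/((k:ℝ)*Real.sqrt k)) := by
          have : (0:ℝ) ≤ 1/((k:ℝ)*Real.sqrt k) := by positivity
          have hq : (0:ℝ) ≤ 2*Real.sqrt 2/(((j:ℝ)+(k:ℝ))*Real.sqrt ((j:ℝ)+(k:ℝ))) := by positivity
          nlinarith
  · -- j is the big one
    have h1 : ((j:ℝ)+(k:ℝ)) * Real.sqrt ((j:ℝ)+(k:ℝ)) ≤ 2*Real.sqrt 2 * ((j:ℝ)*Real.sqrt j) := by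
      have := hmono ((j:ℝ)+(k:ℝ)) (2*j) (by linarith) (by linarith)
      have h2j : Real.sqrt (2*(j:ℝ)) = Real.sqrt 2 * Real.sqrt j := Real.sqrt_mul (by norm_num) _
      rw [h2j] at this
      nlinarith
    have h2 : 1/((j:ℝ)*Real.sqrt j) ≤ 2*Real.sqrt 2/(((j:ℝ)+(k:ℝ))*Real.sqrt ((j:ℝ)+(k:ℝ))) := by
      rw [div_le_div_iff₀ (by positivity) (by positivity)]
      nlinarith
    have hpos1 : (0:ℝ) < 1/((k:ℝ)*Real.sqrt k) := by positivity
    calc 1/((j:ℝ)*Real.sqrt j*((k:ℝ)*Real.sqrt k))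
        = (1/((k:ℝ)*Real.sqrt k)) * (1/((j:ℝ)*Real.sqrt j)) := by ring
      _ ≤ (1/((k:ℝ)*Real.sqrt k)) * (2*Real.sqrt 2/(((j:ℝ)+(k:ℝ))*Real.sqrt ((j:ℝ)+(k:ℝ)))) := by
          exact mul_le_mul_of_nonneg_left h2 hpos1.le
      _ ≤ 2*Real.sqrt 2/(((j:ℝ)+(k:ℝ))*Real.sqrt ((j:ℝ)+(k:ℝ))) * (1/((j:ℝ)*Real.sqrt j) + 1/((k:ℝ)*Real.sqrt k)) := by
          have : (0:ℝ) ≤ 1/((j:ℝ)*Real.sqrt j) := by positivity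
          have hq : (0:ℝ) ≤ 2*Real.sqrt 2/(((j:ℝ)+(k:ℝ))*Real.sqrt ((j:ℝ)+(k:ℝ))) := by positivity
          nlinarith

lemma choose_bound (j k : ℕ) (hj : 1 ≤ j) (hk : 1 ≤ k) :
    (((j+k).choose j : ℕ) : ℝ) ≤
      Real.exp 1 / 2 * (Real.sqrt ((j:ℝ)+(k:ℝ)) * ((j:ℝ)+(k:ℝ))^(j+k))
        / (Real.sqrt j * (j:ℝ)^j * (Real.sqrt k * (k:ℝ)^k)) := by
  have hjr : (0:ℝ) < (j:ℝ) := by exact_mod_cast hj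
  have hkr : (0:ℝ) < (k:ℝ) := by exact_mod_cast hk
  have hnat : (j+k).choose j * j ! * k ! = (j+k)! := by
    have := Nat.choose_mul_factorial_mul_factorial (Nat.le_add_right j k)
    simpa using this
  have hne : ((j+k).choose j : ℝ) * (j ! : ℝ) * (k ! : ℝ) = ((j+k)! : ℝ) := by
    exact_mod_cast congrArg (Nat.cast (R := ℝ)) hnat
  have hfpos : (0:ℝ) < (j ! : ℝ) * (k ! : ℝ) := by positivity
  have hc : ((j+k).choose j : ℝ) = ((j+k)! : ℝ) / ((j ! : ℝ) * (k ! : ℝ)) := by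
    rw [eq_div_iff hfpos.ne']; linarith [hne]
  set B := Real.sqrt 2 * Real.sqrt j * ((j:ℝ) / Real.exp 1)^j with hB
  set C := Real.sqrt 2 * Real.sqrt k * ((k:ℝ) / Real.exp 1)^k with hC
  have hBpos : 0 < B := by rw [hB]; positivity
  have hCpos : 0 < C := by rw [hC]; positivity
  have hfu := fact_upper (j+k) (by omega)
  push_cast at hfu
  have hstep : ((j+k).choose j : ℝ) ≤
      (Real.exp 1 * (Real.sqrt ((j:ℝ)+(k:ℝ)) * (((j:ℝ)+(k:ℝ)) / Real.exp 1)^(j+k))) / (B * C) := by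
    rw [hc]
    apply div_le_div₀ (by positivity) hfu (by positivity)
    exact mul_le_mul (fact_lower j hj) (fact_lower k hk) hCpos.le (by positivity)
  refine hstep.trans (le_of_eq ?_)
  rw [hB, hC]
  have hEpow : Real.exp 1 ^ (j+k) = Real.exp 1 ^ j * Real.exp 1 ^ k := pow_add _ _ _
  have hE : (0:ℝ) < Real.exp 1 := Real.exp_pos 1
  have hsq : Real.sqrt 2 ^ 2 = 2 := Real.sq_sqrt (by norm_num)
  rw [div_pow, div_pow, div_pow, hEpow]
  have hsj : (0:ℝ) < Real.sqrt j := Real.sqrt_pos.mpr hjr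
  have hsk : (0:ℝ) < Real.sqrt k := Real.sqrt_pos.mpr hkr
  have hs2 : (0:ℝ) < Real.sqrt 2 := by positivity
  field_simp
  ring_nf
  nlinarith [hsq, hE, pow_pos hE j, pow_pos hE k,
    mul_pos (mul_pos (mul_pos hsj (pow_pos hjr j)) hsk) (pow_pos hkr k)]

lemma term_bound (j k : ℕ) (hj : 1 ≤ j) (hk : 1 ≤ k) :
    ((j+k).choose j : ℝ) * (j:ℝ)^(j-1) * (k:ℝ)^(k-1) ≤
      Real.sqrt 2 * Real.exp 1 * ((j:ℝ)+(k:ℝ))^(j+k-1) *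
        (1/((j:ℝ)*Real.sqrt j) + 1/((k:ℝ)*Real.sqrt k)) := by
  have hjr : (1:ℝ) ≤ (j:ℝ) := by exact_mod_cast hj
  have hkr : (1:ℝ) ≤ (k:ℝ) := by exact_mod_cast hk
  have hsj : (0:ℝ) < Real.sqrt j := Real.sqrt_pos.mpr (by linarith)
  have hsk : (0:ℝ) < Real.sqrt k := Real.sqrt_pos.mpr (by linarith)
  have hsn : (0:ℝ) < Real.sqrt ((j:ℝ)+(k:ℝ)) := Real.sqrt_pos.mpr (by linarith)
  have hjj : (j:ℝ)^j = (j:ℝ)^(j-1)*(j:ℝ) := by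
    rw [← pow_succ]; congr 1; omega
  have hkk : (k:ℝ)^k = (k:ℝ)^(k-1)*(k:ℝ) := by
    rw [← pow_succ]; congr 1; omega
  have hnn : ((j:ℝ)+(k:ℝ))^(j+k) = ((j:ℝ)+(k:ℝ))^(j+k-1)*((j:ℝ)+(k:ℝ)) := by
    rw [← pow_succ]; congr 1; omega
  have hE : (0:ℝ) < Real.exp 1 := Real.exp_pos 1
  have hpj : (0:ℝ) < (j:ℝ)^(j-1) := by positivity
  have hpk : (0:ℝ) < (k:ℝ)^(k-1) := by positivity
  have step1 : ((j+k).choose j : ℝ) * (j:ℝ)^(j-1) * (k:ℝ)^(k-1) ≤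
      Real.exp 1 / 2 * (Real.sqrt ((j:ℝ)+(k:ℝ)) * ((j:ℝ)+(k:ℝ))^(j+k)) *
        (1/((j:ℝ)*Real.sqrt j*((k:ℝ)*Real.sqrt k))) := by
    have h := mul_le_mul_of_nonneg_right (choose_bound j k hj hk)
      (by positivity : (0:ℝ) ≤ (j:ℝ)^(j-1) * (k:ℝ)^(k-1))
    calc ((j+k).choose j : ℝ) * (j:ℝ)^(j-1) * (k:ℝ)^(k-1)
        = ((j+k).choose j : ℝ) * ((j:ℝ)^(j-1) * (k:ℝ)^(k-1)) := by ring
      _ ≤ (Real.exp 1 / 2 * (Real.sqrt ((j:ℝ)+(k:ℝ)) * ((j:ℝ)+(k:ℝ))^(j+k))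
            / (Real.sqrt j * (j:ℝ)^j * (Real.sqrt k * (k:ℝ)^k))) * ((j:ℝ)^(j-1) * (k:ℝ)^(k-1)) := h
      _ = Real.exp 1 / 2 * (Real.sqrt ((j:ℝ)+(k:ℝ)) * ((j:ℝ)+(k:ℝ))^(j+k)) *
            (1/((j:ℝ)*Real.sqrt j*((k:ℝ)*Real.sqrt k))) := by
          rw [hjj, hkk]
          field_simp
  have step2 := mul_le_mul_of_nonneg_left (split_bound j k hj hk)
    (by positivity : (0:ℝ) ≤ Real.exp 1 / 2 * (Real.sqrt ((j:ℝ)+(k:ℝ)) * ((j:ℝ)+(k:ℝ))^(j+k)))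
  refine step1.trans (step2.trans (le_of_eq ?_))
  rw [hnn]
  field_simp

/-- **Kahane combinatorial inequality.** There is a universal constant `C > 0` such
that for every `n ≥ 1`,
`∑_{j=0}^{n} C(n,j) a_j a_{n-j} ≤ C n^{n-1}`, where `a_0 = 1` and `a_j = j^{j-1}`;
equivalently `2 n^{n-1} + ∑_{j=1}^{n-1} C(n,j) j^{j-1} (n-j)^{n-j-1} ≤ C n^{n-1}`. -/
theorem kahane_combinatorial_inequality :
    ∃ C : ℝ, 0 < C ∧ ∀ n : ℕ, 1 ≤ n →
      (∑ j ∈ Finset.range (n + 1),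
          (n.choose j : ℝ) * kahaneCoeff j * kahaneCoeff (n - j))
        ≤ C * (n : ℝ) ^ (n - 1) := by
  refine ⟨30, by norm_num, ?_⟩
  intro n hn
  obtain ⟨m, rfl⟩ : ∃ m, n = m + 1 := ⟨n-1, by omega⟩
  rw [Finset.sum_range_succ, Finset.sum_range_succ']
  have hend : kahaneCoeff 0 = 1 := by simp [kahaneCoeff]
  have htop : kahaneCoeff (m+1) = ((m+1:ℕ):ℝ)^m := by simp [kahaneCoeff]
  have h0term : ((m+1).choose 0 : ℝ) * kahaneCoeff 0 * kahaneCoeff (m+1-0) = ((m+1:ℕ):ℝ)^m := by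
    simp [hend, htop]
  have htopterm : ((m+1).choose (m+1) : ℝ) * kahaneCoeff (m+1) * kahaneCoeff (m+1-(m+1)) =
      ((m+1:ℕ):ℝ)^m := by
    simp [hend, htop]
  rw [h0term, htopterm]
  -- middle sum bound
  set c : ℝ := Real.sqrt 2 * Real.exp 1 * ((m+1:ℕ):ℝ)^m with hc
  have hcpos : 0 ≤ c := by rw [hc]; positivity
  have hmid : ∀ i ∈ range m,
      ((m+1).choose (i+1) : ℝ) * kahaneCoeff (i+1) * kahaneCoeff (m-i) ≤
        c * (1/(((i:ℝ)+1)*Real.sqrt ((i:ℝ)+1)) + 1/(((m-i:ℕ):ℝ)*Real.sqrt ((m-i:ℕ):ℝ))) := by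
    intro i hi
    have him : i < m := Finset.mem_range.mp hi
    set j := i + 1 with hj
    set k := m - i with hk
    have hj1 : 1 ≤ j := by omega
    have hk1 : 1 ≤ k := by omega
    have hjk : j + k = m + 1 := by omega
    have hkc1 : kahaneCoeff j = (j:ℝ)^(j-1) := by
      rw [kahaneCoeff, if_neg (by omega)]
    have hkc2 : kahaneCoeff (m-i) = (k:ℝ)^(k-1) := by
      rw [hk, kahaneCoeff, if_neg (by omega)]
    have hch : (m+1).choose j = (j+k).choose j := by rw [hjk]
    rw [hkc1, hkc2, hch]
    have hcast : (j:ℝ) + (k:ℝ) = ((m+1:ℕ):ℝ) := by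
      exact_mod_cast congrArg (Nat.cast (R := ℝ)) hjk
    have := term_bound j k hj1 hk1
    rw [hcast, show j + k - 1 = m by omega] at this
    rw [show (i:ℝ)+1 = ((j:ℕ):ℝ) from by rw [hj, Nat.cast_succ], show ((m-i:ℕ):ℝ) = ((k:ℕ):ℝ) from by rw [hk]]
    exact this
  have hsum := Finset.sum_le_sum hmid
  have hdist : ∑ i ∈ range m,
      c * (1/(((i:ℝ)+1)*Real.sqrt ((i:ℝ)+1)) + 1/(((m-i:ℕ):ℝ)*Real.sqrt ((m-i:ℕ):ℝ)))
      = c * ((∑ i ∈ range m, 1/(((i:ℝ)+1)*Real.sqrt ((i:ℝ)+1)))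
           + ∑ i ∈ range m, 1/(((m-i:ℕ):ℝ)*Real.sqrt ((m-i:ℕ):ℝ))) := by
    rw [← Finset.sum_add_distrib, Finset.mul_sum]
  have hreflect : ∑ i ∈ range m, 1/(((m-i:ℕ):ℝ)*Real.sqrt ((m-i:ℕ):ℝ))
      = ∑ i ∈ range m, 1/(((i:ℝ)+1)*Real.sqrt ((i:ℝ)+1)) := by
    rw [← Finset.sum_range_reflect (fun i => 1/(((i:ℝ)+1)*Real.sqrt ((i:ℝ)+1))) m]
    apply Finset.sum_congr rfl
    intro i hi
    have him : i < m := Finset.mem_range.mp hi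
    have : ((m - 1 - i : ℕ):ℝ) + 1 = ((m-i:ℕ):ℝ) := by
      have h2 : (m - 1 - i) + 1 = m - i := by omega
      exact_mod_cast congrArg (Nat.cast (R := ℝ)) h2
    rw [this]
  have hS : ∑ i ∈ range m, 1/(((i:ℝ)+1)*Real.sqrt ((i:ℝ)+1)) ≤ 3 := by
    have := sum_inv_le m
    have h2 : 0 ≤ 2/Real.sqrt m := by positivity
    linarith
  have hSnonneg : 0 ≤ ∑ i ∈ range m, 1/(((i:ℝ)+1)*Real.sqrt ((i:ℝ)+1)) := by
    apply Finset.sum_nonneg; intro i _; positivity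
  have hmidtotal : ∑ i ∈ range m,
      ((m+1).choose (i+1) : ℝ) * kahaneCoeff (i+1) * kahaneCoeff (m-i) ≤ 6 * c := by
    refine hsum.trans ?_
    rw [hdist, hreflect]
    have : (∑ i ∈ range m, 1/(((i:ℝ)+1)*Real.sqrt ((i:ℝ)+1)))
           + ∑ i ∈ range m, 1/(((i:ℝ)+1)*Real.sqrt ((i:ℝ)+1)) ≤ 6 := by linarith
    nlinarith
  -- numerics: 2 + 6 * √2 * e ≤ 30
  have hsqrt2 : Real.sqrt 2 ≤ 1.5 := by
    nlinarith [Real.sq_sqrt (show (0:ℝ) ≤ 2 by norm_num), Real.sqrt_nonneg 2]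
  have he : Real.exp 1 ≤ 2.7182818286 := (Real.exp_one_lt_d9).le
  have hpow : (0:ℝ) < ((m+1:ℕ):ℝ)^m := by positivity
  have hcle : c ≤ 1.5 * 2.7182818286 * ((m+1:ℕ):ℝ)^m := by
    rw [hc]
    have h1 : Real.sqrt 2 * Real.exp 1 ≤ 1.5 * 2.7182818286 := by
      nlinarith [Real.sqrt_nonneg 2, Real.exp_pos 1]
    nlinarith
  have hgoal : ((m+1:ℕ):ℝ)^(m+1-1) = ((m+1:ℕ):ℝ)^m := by norm_num
  push_cast at hgoal hmidtotal hcle hpow hc ⊢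
  nlinarith [hmidtotal, hcle, hpow, hcpos]
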